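/- Let (Ω, μ) be a σ-finite measure space, f : (0,∞) → ℝ convex, and φ, ψ ∈ L¹(Ω,μ) nonnegative. Define the classical f-divergence S_f(φ‖ψ) = ∫_{{φ>0}∩{ψ>0}} ψ·f(φ/ψ) dμ + f(0⁺)·∫_{{φ=0}} ψ dμ + f'(∞)·∫_{{ψ=0}} φ dμ, with values in (-∞,+∞]. Then S_f(φ‖ψ) ≥ (∫ψ dμ)·f((∫φ dμ)/(∫ψ dμ)) whenever ∫ψ dμ > 0. -/

import Mathlib

open MeasureTheory Set Filter ENNReal

/-- The extended-real-valued integral of a real function, with value in `(-∞,+∞]`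
when the negative part is integrable. -/
noncomputable def eIntegral {Ω : Type*} [MeasurableSpace Ω] (μ : Measure Ω)
    (g : Ω → ℝ) : EReal :=
  ((∫⁻ x, ENNReal.ofReal (g x) ∂μ : ℝ≥0∞) : EReal)
    - ((∫⁻ x, ENNReal.ofReal (-(g x)) ∂μ : ℝ≥0∞) : EReal)

/-- The classical `f`-divergence
`S_f(φ‖ψ) = ∫_{{φ>0}∩{ψ>0}} ψ·f(φ/ψ) dμ + f(0⁺)·∫_{{φ=0}} ψ dμ + f'(∞)·∫_{{ψ=0}} φ dμ`,
with values in `(-∞,+∞]`; here `f0` plays the role of `f(0⁺)` and `finf` of `f'(∞)`. -/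
noncomputable def classicalFDiv {Ω : Type*} [MeasurableSpace Ω] (μ : Measure Ω)
    (f : ℝ → ℝ) (f0 finf : EReal) (φ ψ : Ω → ℝ) : EReal :=
  eIntegral μ (fun x => if 0 < φ x ∧ 0 < ψ x then ψ x * f (φ x / ψ x) else 0)
    + f0 * ((∫ x in {x | φ x = 0}, ψ x ∂μ : ℝ) : EReal)
    + finf * ((∫ x in {x | ψ x = 0}, φ x ∂μ : ℝ) : EReal)

lemma coe_toReal_ereal {x : ℝ≥0∞} (hx : x ≠ ⊤) : ((x.toReal : ℝ) : EReal) = (x : EReal) := by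
  conv_rhs => rw [← ENNReal.ofReal_toReal hx]
  rw [EReal.coe_ennreal_ofReal, max_eq_left ENNReal.toReal_nonneg]

lemma le_eIntegral' {Ω : Type*} [MeasurableSpace Ω] {μ : Measure Ω}
    {g h : Ω → ℝ} (hh : Integrable h μ) (hle : ∀ x, h x ≤ g x) :
    ((∫ x, h x ∂μ : ℝ) : EReal) ≤ eIntegral μ g := by
  have hfin : ∀ (k : Ω → ℝ), (∀ x, |k x| ≤ |h x|) → (∫⁻ x, ENNReal.ofReal (k x) ∂μ) ≠ ⊤ := by
    intro k hk
    refine ne_of_lt (lt_of_le_of_lt (lintegral_mono fun x => ?_) hh.2)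
    calc ENNReal.ofReal (k x) ≤ ENNReal.ofReal ‖h x‖ :=
          ENNReal.ofReal_le_ofReal ((le_abs_self _).trans (hk x))
      _ = (‖h x‖₊ : ℝ≥0∞) := ofReal_norm_eq_enorm _
  have h1 : (∫⁻ x, ENNReal.ofReal (h x) ∂μ) ≠ ⊤ := hfin _ (fun x => le_rfl)
  have h2 : (∫⁻ x, ENNReal.ofReal (-h x) ∂μ) ≠ ⊤ := hfin _ (fun x => by rw [abs_neg])
  rw [integral_eq_lintegral_pos_part_sub_lintegral_neg_part hh, EReal.coe_sub,
    coe_toReal_ereal h1, coe_toReal_ereal h2]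
  refine EReal.sub_le_sub ?_ ?_
  · exact_mod_cast EReal.coe_ennreal_le_coe_ennreal_iff.2
      (lintegral_mono fun x => ENNReal.ofReal_le_ofReal (hle x))
  · exact_mod_cast EReal.coe_ennreal_le_coe_ennreal_iff.2
      (lintegral_mono fun x => ENNReal.ofReal_le_ofReal (by linarith [hle x]))


/-- Peierls–Bogoliubov / Jensen inequality for classical `f`-divergences:
`S_f(φ‖ψ) ≥ (∫ψ dμ)·f((∫φ dμ)/(∫ψ dμ))` whenever `∫ψ dμ > 0` (with the boundary
convention `(∫ψ)·f(0⁺)` if `∫φ dμ = 0`). -/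
theorem classicalFDiv_ge (Ω : Type*) [MeasurableSpace Ω] (μ : Measure Ω)
    [SigmaFinite μ] (f : ℝ → ℝ) (hf : ConvexOn ℝ (Set.Ioi 0) f)
    (f0 finf : EReal) (hf0bot : f0 ≠ ⊥) (hfinfbot : finf ≠ ⊥)
    (hf0 : Tendsto (fun t : ℝ => (f t : EReal)) (nhdsWithin 0 (Set.Ioi 0)) (nhds f0))
    (hfinf : Tendsto (fun t : ℝ => ((f t / t : ℝ) : EReal)) atTop (nhds finf))
    (φ ψ : Ω → ℝ) (hφm : Measurable φ) (hψm : Measurable ψ)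
    (hφ0 : ∀ x, 0 ≤ φ x) (hψ0 : ∀ x, 0 ≤ ψ x)
    (hφi : Integrable φ μ) (hψi : Integrable ψ μ) (hψpos : 0 < ∫ x, ψ x ∂μ) :
    (if 0 < ∫ x, φ x ∂μ then
        (((∫ x, ψ x ∂μ) * f ((∫ x, φ x ∂μ) / (∫ x, ψ x ∂μ)) : ℝ) : EReal)
      else f0 * ((∫ x, ψ x ∂μ : ℝ) : EReal))
      ≤ classicalFDiv μ f f0 finf φ ψ := by
  set g : Ω → ℝ := fun x => if 0 < φ x ∧ 0 < ψ x then ψ x * f (φ x / ψ x) else 0 with hg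
  by_cases hφpos : 0 < ∫ x, φ x ∂μ
  · rw [if_pos hφpos]
    set Iψ := ∫ x, ψ x ∂μ
    set Iφ := ∫ x, φ x ∂μ
    set m := Iφ / Iψ with hm_def
    have hm : 0 < m := div_pos hφpos hψpos
    -- subgradient at m
    set sl : ℝ → ℝ := fun y => (f y - f m) / (y - m) with hsl
    set E : Set ℝ := sl '' Ioi m with hE
    have hEne : E.Nonempty := ⟨sl (m + 1), ⟨m + 1, by simp, rfl⟩⟩
    have hEbdd : BddBelow E := by
      refine ⟨sl (m / 2), fun s hs => ?_⟩
      obtain ⟨y, hy, rfl⟩ := hs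
      exact hf.secant_mono (mem_Ioi.2 hm) (mem_Ioi.2 (by linarith)) (mem_Ioi.2 (by linarith [mem_Ioi.1 hy]))
        (by intro h; linarith) (by intro h; rw [h] at hy; exact lt_irrefl _ (mem_Ioi.1 hy))
        (by linarith [mem_Ioi.1 hy])
    set c : ℝ := sInf E with hc_def
    have key : ∀ t : ℝ, 0 < t → f m + c * (t - m) ≤ f t := by
      intro t ht
      rcases lt_trichotomy t m with h | h | h
      · have h1 : sl t ≤ c := by
          refine le_csInf hEne fun s hs => ?_
          obtain ⟨y, hy, rfl⟩ := hs
          exact hf.secant_mono (mem_Ioi.2 hm) (mem_Ioi.2 ht) (mem_Ioi.2 (by linarith [mem_Ioi.1 hy]))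
            (ne_of_lt h) (by intro he; rw [he] at hy; exact lt_irrefl _ (mem_Ioi.1 hy))
            (by linarith [mem_Ioi.1 hy])
        have h2 : t - m < 0 := by linarith
        rw [hsl] at h1
        have := (div_le_iff_of_neg h2).1 h1
        linarith
      · subst h; simp
      · have h1 : c ≤ sl t := csInf_le hEbdd ⟨t, mem_Ioi.2 h, rfl⟩
        have h2 : (0:ℝ) < t - m := by linarith
        rw [hsl] at h1
        have := (le_div_iff₀ h2).1 h1
        linarith
    set ℓ0 : ℝ := f m - c * m with hℓ0_def
    -- f0 ≥ ℓ0
    have hℓ0 : (ℓ0 : EReal) ≤ f0 := by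
      have hlim : Tendsto (fun t : ℝ => ((f m + c * (t - m) : ℝ) : EReal))
          (nhdsWithin 0 (Set.Ioi 0)) (nhds (ℓ0 : EReal)) := by
        apply (continuous_coe_real_ereal.tendsto _).comp
        have hcont : Continuous fun t : ℝ => f m + c * (t - m) := by continuity
        have h0 : f m + c * (0 - m) = ℓ0 := by rw [hℓ0_def]; ring
        have := (hcont.tendsto 0).mono_left (nhdsWithin_le_nhds (s := Set.Ioi (0:ℝ)))
        rwa [h0] at this
      refine le_of_tendsto_of_tendsto hlim hf0 ?_
      filter_upwards [self_mem_nhdsWithin] with t ht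
      exact EReal.coe_le_coe_iff.2 (key t ht)
    -- finf ≥ c
    have hcfin : (c : EReal) ≤ finf := by
      have hlim : Tendsto (fun t : ℝ => (((f m + c * (t - m)) / t : ℝ) : EReal))
          atTop (nhds (c : EReal)) := by
        apply (continuous_coe_real_ereal.tendsto _).comp
        have h1 : Tendsto (fun t : ℝ => (f m - c * m) / t + c) atTop (nhds (0 + c)) :=
          (tendsto_const_nhds.div_atTop tendsto_id).add tendsto_const_nhds
        rw [zero_add] at h1
        refine h1.congr' ?_
        filter_upwards [eventually_gt_atTop (0:ℝ)] with t ht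
        field_simp
        ring
      refine le_of_tendsto_of_tendsto hlim hfinf ?_
      filter_upwards [eventually_gt_atTop (0:ℝ)] with t ht
      exact EReal.coe_le_coe_iff.2 ((div_le_div_iff_of_pos_right ht).2 (key t ht))
    -- the affine minorant
    set S : Set Ω := {x | 0 < φ x ∧ 0 < ψ x} with hS
    have hSm : MeasurableSet S := (measurableSet_lt measurable_const hφm).inter
      (measurableSet_lt measurable_const hψm)
    set h : Ω → ℝ := S.indicator (fun x => ℓ0 * ψ x + c * φ x) with hh_def
    have hInt : Integrable h μ :=
      (((hψi.const_mul ℓ0).add (hφi.const_mul c)).indicator hSm)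
    have hle : ∀ x, h x ≤ g x := by
      intro x
      by_cases hx : x ∈ S
      · rw [hh_def, indicator_of_mem hx, hg]
        simp only [hx.1, hx.2, and_self, if_true]
        have hk := key (φ x / ψ x) (div_pos hx.1 hx.2)
        have := mul_le_mul_of_nonneg_left hk (le_of_lt hx.2)
        have hne : ψ x ≠ 0 := ne_of_gt hx.2
        calc ℓ0 * ψ x + c * φ x = ψ x * (f m + c * (φ x / ψ x - m)) := by
              field_simp [hℓ0_def, hne]; ring
          _ ≤ ψ x * f (φ x / ψ x) := this
      · rw [hh_def, indicator_of_notMem hx, hg]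
        simp only [hS, mem_setOf_eq] at hx
        simp [hx]
    -- integral identities
    have hφ0m : MeasurableSet {x | φ x = 0} := hφm (measurableSet_singleton 0)
    have hψ0m : MeasurableSet {x | ψ x = 0} := hψm (measurableSet_singleton 0)
    set A := ∫ x in {x | φ x = 0}, ψ x ∂μ with hA_def
    set B := ∫ x in {x | ψ x = 0}, φ x ∂μ with hB_def
    have hdisjA : Disjoint S {x | φ x = 0} := by
      rw [disjoint_left]; intro x hx hx'; exact absurd hx' (ne_of_gt hx.1)
    have hdisjB : Disjoint S {x | ψ x = 0} := by
      rw [disjoint_left]; intro x hx hx'; exact absurd hx' (ne_of_gt hx.2)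
    have hA : ∫ x in S, ψ x ∂μ + A = Iψ := by
      rw [hA_def, ← setIntegral_union hdisjA hφ0m hψi.integrableOn hψi.integrableOn]
      refine setIntegral_eq_integral_of_forall_compl_eq_zero fun x hx => ?_
      simp only [mem_union, hS, mem_setOf_eq, not_or] at hx
      rcases (hφ0 x).eq_or_lt with h' | h'
      · exact absurd h'.symm hx.2
      · have := hx.1; push_neg at this
        exact le_antisymm (this h') (hψ0 x)
    have hB : ∫ x in S, φ x ∂μ + B = Iφ := by
      rw [hB_def, ← setIntegral_union hdisjB hψ0m hφi.integrableOn hφi.integrableOn]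
      refine setIntegral_eq_integral_of_forall_compl_eq_zero fun x hx => ?_
      simp only [mem_union, hS, mem_setOf_eq, not_or] at hx
      rcases (hψ0 x).eq_or_lt with h' | h'
      · exact absurd h'.symm hx.2
      · have := hx.1; push_neg at this
        have h2 : ¬ 0 < φ x := fun hc => absurd h' (not_lt.2 (this hc))
        exact le_antisymm (not_lt.1 h2) (hφ0 x)
    have hIh : ∫ x, h x ∂μ = ℓ0 * ∫ x in S, ψ x ∂μ + c * ∫ x in S, φ x ∂μ := by
      rw [hh_def, integral_indicator hSm,
        integral_add ((hψi.const_mul ℓ0).integrableOn) ((hφi.const_mul c).integrableOn),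
        integral_const_mul, integral_const_mul]
    have hA0 : (0:ℝ) ≤ A := setIntegral_nonneg hφ0m fun x _ => hψ0 x
    have hB0 : (0:ℝ) ≤ B := setIntegral_nonneg hψ0m fun x _ => hφ0 x
    -- assemble
    have step1 : ((∫ x, h x ∂μ : ℝ) : EReal) ≤ eIntegral μ g := le_eIntegral' hInt hle
    have step2 : ((ℓ0 * A : ℝ) : EReal) ≤ f0 * ((A : ℝ) : EReal) := by
      rw [EReal.coe_mul, mul_comm ((ℓ0 : ℝ) : EReal), mul_comm f0]
      exact mul_le_mul_of_nonneg_left hℓ0 (by exact_mod_cast hA0)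
    have step3 : ((c * B : ℝ) : EReal) ≤ finf * ((B : ℝ) : EReal) := by
      rw [EReal.coe_mul, mul_comm ((c : ℝ) : EReal), mul_comm finf]
      exact mul_le_mul_of_nonneg_left hcfin (by exact_mod_cast hB0)
    have hfinal : (∫ x, h x ∂μ) + ℓ0 * A + c * B = Iψ * f m := by
      rw [hIh]
      have h1 : ℓ0 * (∫ x in S, ψ x ∂μ) + ℓ0 * A = ℓ0 * Iψ := by rw [← mul_add, hA]
      have h2 : c * (∫ x in S, φ x ∂μ) + c * B = c * Iφ := by rw [← mul_add, hB]
      have h3 : Iφ = m * Iψ := by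
        rw [hm_def]; field_simp
      have h4 : c * Iφ = c * m * Iψ := by rw [h3]; ring
      rw [hℓ0_def] at h1 ⊢
      linarith [h1, h2, h4]
    calc ((Iψ * f m : ℝ) : EReal)
        = ((∫ x, h x ∂μ : ℝ) : EReal) + ((ℓ0 * A : ℝ) : EReal) + ((c * B : ℝ) : EReal) := by
          rw [← EReal.coe_add, ← EReal.coe_add, hfinal]
      _ ≤ eIntegral μ g + f0 * ((A : ℝ) : EReal) + finf * ((B : ℝ) : EReal) :=
          add_le_add (add_le_add step1 step2) step3
      _ = classicalFDiv μ f f0 finf φ ψ := rfl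
  · rw [if_neg hφpos]
    have hIφ : ∫ x, φ x ∂μ = 0 :=
      le_antisymm (not_lt.1 hφpos) (integral_nonneg hφ0)
    have hae : φ =ᵐ[μ] 0 := (integral_eq_zero_iff_of_nonneg hφ0 hφi).1 hIφ
    have hg0 : eIntegral μ g = 0 := by
      have hgae : ∀ᵐ x ∂μ, g x = 0 := by
        filter_upwards [hae] with x hx
        rw [hg]; simp [hx]
      have l1 : (∫⁻ x, ENNReal.ofReal (g x) ∂μ) = 0 := by
        have he : (fun x => ENNReal.ofReal (g x)) =ᵐ[μ] (fun _ => (0:ℝ≥0∞)) :=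
          hgae.mono fun x hx => by simp [hx]
        rw [lintegral_congr_ae he, lintegral_zero]
      have l2 : (∫⁻ x, ENNReal.ofReal (-(g x)) ∂μ) = 0 := by
        have he : (fun x => ENNReal.ofReal (-(g x))) =ᵐ[μ] (fun _ => (0:ℝ≥0∞)) :=
          hgae.mono fun x hx => by simp [hx]
        rw [lintegral_congr_ae he, lintegral_zero]
      rw [eIntegral, l1, l2]
      simp
    have hA : ∫ x in {x | φ x = 0}, ψ x ∂μ = ∫ x, ψ x ∂μ := by
      congr 1
      exact Measure.restrict_eq_self_of_ae_mem (hae.mono fun x hx => hx)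
    have hB : ∫ x in {x | ψ x = 0}, φ x ∂μ = 0 := by
      rw [integral_eq_zero_iff_of_nonneg_ae (ae_restrict_of_ae (hae.mono fun x hx => le_of_eq hx.symm))
        hφi.integrableOn]
      exact ae_restrict_of_ae hae
    rw [classicalFDiv, hg0, hA, hB]
    simp
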